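/- In the proof of Corollary C:dv the following is used and proved: for a positive coarsening vector v and a positive integer d, if r = reg-num_v(M), then d(r−1) ∉ reg_{dv}(M); that is, the vanishing H^i_m(M^[dv])_q = 0 for all i ≥ 0 and all q ∈ d(r−1) + N·(d c_v)[1−i] would force H^i_m(M^[v])_{q'} = 0 for all i ≥ 0 and all q' ∈ (r−1) + N c_v[1−i], contradicting r − 1 ∉ reg_v(M). -/

import Mathlib

open MvPolynomial

noncomputable section

/-- The dot product of two integer vectors of length `r`. -/
def vdot {r : ℕ} (u v : Fin r → ℤ) : ℤ := ∑ i, u i * v i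

/-- `Q`: the subsemigroup of `ℤ^r` generated by the degrees `a 1, …, a n` of the variables. -/
def degSemigroup {n r : ℕ} (a : Fin n → Fin r → ℤ) : AddSubmonoid (Fin r → ℤ) :=
  AddSubmonoid.closure (Set.range a)

/-- The polynomial ring `S = k[x_1, …, x_n]`, `ℤ^r`-graded with `deg xᵢ = a i`, is
*positively multigraded*: every variable has nonzero degree and the semigroup `Q`
generated by the degrees has no nonzero invertible elements. -/
def PositivelyMultigraded {n r : ℕ} (a : Fin n → Fin r → ℤ) : Prop :=
  (∀ i, a i ≠ 0) ∧ ∀ q ∈ degSemigroup a, -q ∈ degSemigroup a → q = 0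

/-- `v ∈ ℤ^r` is a *positive coarsening vector*: `vdeg xᵢ = (deg xᵢ) ⬝ v > 0` for every `i`. -/
def IsPosCoarsening {n r : ℕ} (a : Fin n → Fin r → ℤ) (v : Fin r → ℤ) : Prop :=
  ∀ i, 0 < vdot (a i) v

/-- `c_v = lcm(vdeg x_1, …, vdeg x_n)`. -/
def cVal {n r : ℕ} (a : Fin n → Fin r → ℤ) (v : Fin r → ℤ) : ℤ :=
  Finset.univ.lcm fun i => vdot (a i) v

/-- `s_v = max (n·c_v − ∑ vdeg xᵢ, c_v)`. -/
def sVal {n r : ℕ} (a : Fin n → Fin r → ℤ) (v : Fin r → ℤ) : ℤ :=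
  max ((n : ℤ) * cVal a v - ∑ i, vdot (a i) v) (cVal a v)

/-- A `ℤ^r`-grading on a module `M` over `S = k[x_1,…,x_n]` (with `deg xᵢ = a i`):
a family of `k`-subspaces `piece e` forming an internal direct sum decomposition of `M`
and compatible with the `ℤ^r`-grading of `S` by weighted-homogeneous components. -/
structure GradingData (k : Type) [Field k] {n r : ℕ} (a : Fin n → Fin r → ℤ)
    (M : Type) [AddCommGroup M] [Module k M] [Module (MvPolynomial (Fin n) k) M]
    [IsScalarTower k (MvPolynomial (Fin n) k) M] : Type where
  piece : (Fin r → ℤ) → Submodule k M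
  isInternal : DirectSum.IsInternal piece
  smul_mem : ∀ {d e : Fin r → ℤ} {s : MvPolynomial (Fin n) k} {x : M},
    s ∈ weightedHomogeneousSubmodule k a d → x ∈ piece e → s • x ∈ piece (d + e)

variable {k : Type} [Field k] {n r : ℕ} {a : Fin n → Fin r → ℤ}
  {M : Type} [AddCommGroup M] [Module k M] [Module (MvPolynomial (Fin n) k) M]
  [IsScalarTower k (MvPolynomial (Fin n) k) M]

/-- The degree-`m` graded piece of the coarsened `ℤ`-graded module `M^[v]`,
namely `⊕_{d ⬝ v = m} M_d` (as a `k`-subspace of `M`). -/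
def coarsePiece (G : GradingData k a M) (v : Fin r → ℤ) (m : ℤ) : Submodule k M :=
  ⨆ d ∈ {d : Fin r → ℤ | vdot d v = m}, G.piece d

/-- The sign `(-1)^{#{j' ∈ J : j' < j}}` used in the Čech (stable Koszul) differential. -/
def cechSign {n : ℕ} (j : Fin n) (J : Finset (Fin n)) : ℤ :=
  (-1) ^ (J.filter fun j' => j' < j).card

/-- The differential of the stage-`t` Koszul cochain complex `K^•(x_1^t, …, x_n^t; M)`:
`(d f)(J) = ∑_{j ∈ J} ± x_j^t • f (J \ {j})`. -/
def cechDiff (k : Type) [Field k] {n : ℕ} {M : Type} [AddCommGroup M]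
    [Module (MvPolynomial (Fin n) k) M] (t : ℕ) (f : Finset (Fin n) → M) :
    Finset (Fin n) → M := fun J =>
  ∑ j ∈ J, cechSign j J • ((X j : MvPolynomial (Fin n) k) ^ t • f (J.erase j))

/-- The transition map from the stage-`t` to the stage-`t'` Koszul cochain complex,
multiplying the `J`-component by `∏_{j ∈ J} x_j^{t'-t}`. -/
def cechTrans (k : Type) [Field k] {n : ℕ} {M : Type} [AddCommGroup M]
    [Module (MvPolynomial (Fin n) k) M] (t t' : ℕ) (f : Finset (Fin n) → M) :
    Finset (Fin n) → M := fun J =>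
  (∏ j ∈ J, (X j : MvPolynomial (Fin n) k) ^ (t' - t)) • f J

/-- A `p`-cochain at stage `t` which is homogeneous of coarse degree `q`:
its `J`-component lies in the coarse piece of degree `q + t·∑_{j ∈ J} vdeg xⱼ`. -/
def IsHomCochain (G : GradingData k a M) (v : Fin r → ℤ) (t p : ℕ) (q : ℤ)
    (f : Finset (Fin n) → M) : Prop :=
  ∀ J : Finset (Fin n), J.card = p →
    f J ∈ coarsePiece G v (q + (t : ℤ) * ∑ j ∈ J, vdot (a j) v)

/-- Vanishing of the degree-`q` graded piece of the local cohomology `H^i_𝔪(M^[v])`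
(`𝔪 = ⟨x_1,…,x_n⟩`), expressed via the stable Koszul (Čech) direct system:
every homogeneous degree-`q` cocycle at some finite stage is eventually a coboundary. -/
def LocalCohVanish (G : GradingData k a M) (v : Fin r → ℤ) (i : ℕ) (q : ℤ) : Prop :=
  ∀ (t : ℕ) (f : Finset (Fin n) → M), IsHomCochain G v t i q f →
    (∀ J : Finset (Fin n), J.card = i + 1 → cechDiff k t f J = 0) →
    ∃ t', t ≤ t' ∧ ∃ g : Finset (Fin n) → M, IsHomCochain G v t' (i - 1) q g ∧
      ∀ J : Finset (Fin n), J.card = i → cechTrans k t t' f J = cechDiff k t' g J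

/-- `reg_v(M) = {p ∈ ℤ : H^i_𝔪(M)_q = 0 for all i ≥ 0 and all q ∈ p + ℕ c_v[1-i]}`. -/
def regSet (G : GradingData k a M) (v : Fin r → ℤ) : Set ℤ :=
  {p | ∀ i dd : ℕ, LocalCohVanish G v i (p + cVal a v * (1 - (i : ℤ) + (dd : ℤ)))}

/-- The regularity number `reg-num_v(M) = inf {p ∈ reg_v(M) : q ∈ reg_v(M) for all q ≥ p}`. -/
def regNum (G : GradingData k a M) (v : Fin r → ℤ) : ℤ :=
  sInf {p | p ∈ regSet G v ∧ ∀ q : ℤ, p ≤ q → q ∈ regSet G v}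

lemma vdot_int_smul {r : ℕ} (u v : Fin r → ℤ) (c : ℤ) :
    vdot u (c • v) = c * vdot u v := by
  simp [vdot, Finset.mul_sum, mul_left_comm]

lemma coarsePiece_smul (G : GradingData k a M) (v : Fin r → ℤ) {c : ℤ} (hc : c ≠ 0)
    (m : ℤ) : coarsePiece G (c • v) (c * m) = coarsePiece G v m := by
  unfold coarsePiece
  have hset : {δ : Fin r → ℤ | vdot δ (c • v) = c * m} = {δ | vdot δ v = m} := by
    ext δ
    simp only [Set.mem_setOf_eq, vdot_int_smul]
    exact ⟨fun h => mul_left_cancel₀ hc h, fun h => by rw [h]⟩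
  rw [hset]

lemma isHomCochain_smul_iff (G : GradingData k a M) (v : Fin r → ℤ) {c : ℤ} (hc : c ≠ 0)
    (t p : ℕ) (q : ℤ) (f : Finset (Fin n) → M) :
    IsHomCochain G (c • v) t p (c * q) f ↔ IsHomCochain G v t p q f := by
  unfold IsHomCochain
  have key : ∀ J : Finset (Fin n),
      c * q + (t : ℤ) * ∑ j ∈ J, vdot (a j) (c • v)
        = c * (q + (t : ℤ) * ∑ j ∈ J, vdot (a j) v) := by
    intro J
    simp only [vdot_int_smul, ← Finset.mul_sum]
    ring
  constructor
  · intro h J hJ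
    have := h J hJ
    rwa [key J, coarsePiece_smul G v hc] at this
  · intro h J hJ
    rw [key J, coarsePiece_smul G v hc]
    exact h J hJ

lemma localCohVanish_of_smul (G : GradingData k a M) (v : Fin r → ℤ) {c : ℤ} (hc : c ≠ 0)
    (i : ℕ) (q : ℤ) (h : LocalCohVanish G (c • v) i (c * q)) :
    LocalCohVanish G v i q := by
  intro t f hf hcoc
  obtain ⟨t', ht, g, hg, heq⟩ :=
    h t f ((isHomCochain_smul_iff G v hc t i q f).mpr hf) hcoc
  exact ⟨t', ht, g, (isHomCochain_smul_iff G v hc t' (i - 1) q g).mp hg, heq⟩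

lemma finset_lcm_mul_left {ι : Type*} {s : Finset ι} (hs : s.Nonempty) (c : ℤ)
    (hc : 0 ≤ c) (f : ι → ℤ) : s.lcm (fun i => c * f i) = c * s.lcm f := by
  classical
  induction hs using Finset.Nonempty.cons_induction with
  | singleton i =>
      simp [Finset.lcm_singleton, map_mul, Int.normalize_of_nonneg hc]
  | cons i s hi hs ih =>
      rw [Finset.cons_eq_insert, Finset.lcm_insert, Finset.lcm_insert, ih, lcm_mul_left,
        Int.normalize_of_nonneg hc]

lemma cVal_smul (hn : n ≠ 0) (v : Fin r → ℤ) {d : ℕ} (hd : 0 < d) :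
    cVal a ((d : ℤ) • v) = (d : ℤ) * cVal a v := by
  have : Nonempty (Fin n) := ⟨⟨0, Nat.pos_of_ne_zero hn⟩⟩
  unfold cVal
  have hfun : (fun i => vdot (a i) ((d : ℤ) • v)) = fun i => (d : ℤ) * vdot (a i) v := by
    funext i; exact vdot_int_smul _ _ _
  rw [hfun, finset_lcm_mul_left Finset.univ_nonempty (d : ℤ) (by positivity)]

/-- With `r = reg-num_v(M)` (so that `r - 1 ∉ reg_v(M)`), for every
`d > 0` one has `d(r-1) ∉ reg_{d·v}(M)`: otherwise the vanishing
`H^i_𝔪(M^[d·v])_q = 0` for all `q ∈ d(r-1) + ℕ(d c_v)[1-i]` would force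
`H^i_𝔪(M^[v])_{q'} = 0` for all `q' ∈ (r-1) + ℕ c_v[1-i]`, contradicting
`r - 1 ∉ reg_v(M)`. -/
theorem scalar_regNum_not_mem
    {k : Type} [Field k] {n r : ℕ} {a : Fin n → Fin r → ℤ}
    (hpos : PositivelyMultigraded a)
    {M : Type} [AddCommGroup M] [Module k M] [Module (MvPolynomial (Fin n) k) M]
    [IsScalarTower k (MvPolynomial (Fin n) k) M]
    [Module.Finite (MvPolynomial (Fin n) k) M]
    (G : GradingData k a M) (v : Fin r → ℤ) (hv : IsPosCoarsening a v)
    (d : ℕ) (hd : 0 < d)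
    (hr : regNum G v - 1 ∉ regSet G v) :
    (d : ℤ) * (regNum G v - 1) ∉ regSet G ((d : ℤ) • v) := by
  intro hmem
  apply hr
  intro i dd
  set R : ℤ := regNum G v - 1 with hR
  have hdz : (d : ℤ) ≠ 0 := by exact_mod_cast hd.ne'
  rcases Nat.eq_zero_or_pos n with hn | hn
  · -- `n = 0`: the Čech complex is trivial.
    subst hn
    rcases Nat.eq_zero_or_pos i with hi | hi
    · subst hi
      -- use `dd₂ = d*(1+dd) - 1`
      have hc1 : cVal a ((d : ℤ) • v) = 1 := by simp [cVal]
      have hc2 : cVal a v = 1 := by simp [cVal]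
      have hmem' := hmem 0 (d * (1 + dd) - 1)
      have hdd : ((d * (1 + dd) - 1 : ℕ) : ℤ) = (d : ℤ) * (1 + (dd : ℤ)) - 1 := by
        have h1 : 1 ≤ d * (1 + dd) := Nat.one_le_iff_ne_zero.mpr (by positivity)
        push_cast [h1]
        ring
      rw [hc1, hdd] at hmem'
      have hdeg : (d : ℤ) * R + 1 * (1 - (0 : ℕ) + ((d : ℤ) * (1 + (dd : ℤ)) - 1))
          = (d : ℤ) * (R + cVal a v * (1 - (0 : ℕ) + (dd : ℤ))) := by
        rw [hc2]; push_cast; ring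
      rw [hdeg] at hmem'
      exact localCohVanish_of_smul G v hdz 0 _ hmem'
    · -- `i ≥ 1`: vacuously true
      intro t f _ _
      refine ⟨t, le_rfl, fun _ => 0, fun J _ => Submodule.zero_mem _, fun J hJ => ?_⟩
      exfalso
      have hle := Finset.card_le_univ J
      simp only [Finset.card_univ, Fintype.card_fin] at hle
      omega
  · -- `n ≥ 1`: `c_{dv} = d·c_v`
    have hc := cVal_smul (a := a) hn.ne' v hd
    have hmem' := hmem i dd
    rw [hc] at hmem'
    have hdeg : (d : ℤ) * R + (d : ℤ) * cVal a v * (1 - (i : ℤ) + (dd : ℤ))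
        = (d : ℤ) * (R + cVal a v * (1 - (i : ℤ) + (dd : ℤ))) := by ring
    rw [hdeg] at hmem'
    exact localCohVanish_of_smul G v hdz i _ hmem'
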